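/- The series of reciprocals of Fibonacci numbers with index a power of two converges and ∑_{n=0}^∞ 1/F_{2^n} = (7 - √5)/2. -/

import Mathlib

open Nat Real Filter goldenRatio

lemma fib_catalan (j : ℕ) :
    (Nat.fib j : ℤ) * Nat.fib (j + 2) - (Nat.fib (j + 1)) ^ 2 = (-1) ^ (j + 1) := by
  induction j with
  | zero => simp
  | succ j ih =>
    have h1 : (Nat.fib (j + 2) : ℤ) = Nat.fib j + Nat.fib (j + 1) := by
      rw [Nat.fib_add_two]; push_cast; ring
    have h2 : (Nat.fib (j + 3) : ℤ) = Nat.fib (j + 1) + Nat.fib (j + 2) := by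
      rw [show j + 3 = (j + 1) + 2 from rfl, Nat.fib_add_two]; push_cast; ring
    rw [h1] at ih
    rw [show j + 1 + 2 = j + 3 from rfl, h2, h1]
    linear_combination -ih

lemma fib_key (t : ℕ) :
    (Nat.fib (2 * t + 1) : ℤ) * Nat.fib (4 * t + 4)
      - Nat.fib (4 * t + 3) * Nat.fib (2 * t + 2) = Nat.fib (2 * t + 2) := by
  have hA : (Nat.fib (4 * t + 4) : ℤ)
      = Nat.fib (2 * t + 1) * Nat.fib (2 * t + 2)
        + Nat.fib (2 * t + 2) * Nat.fib (2 * t + 3) := by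
    have := Nat.fib_add (2 * t + 1) (2 * t + 2)
    rw [show 2 * t + 1 + (2 * t + 2) + 1 = 4 * t + 4 by ring] at this
    exact_mod_cast congrArg (Nat.cast : ℕ → ℤ) this
  have hB : (Nat.fib (4 * t + 3) : ℤ)
      = Nat.fib (2 * t + 1) * Nat.fib (2 * t + 1)
        + Nat.fib (2 * t + 2) * Nat.fib (2 * t + 2) := by
    have := Nat.fib_add (2 * t + 1) (2 * t + 1)
    rw [show 2 * t + 1 + (2 * t + 1) + 1 = 4 * t + 3 by ring] at this
    exact_mod_cast congrArg (Nat.cast : ℕ → ℤ) this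
  have hC := fib_catalan (2 * t + 1)
  have hpow : ((-1 : ℤ)) ^ (2 * t + 1 + 1) = 1 := by
    rw [show 2 * t + 1 + 1 = 2 * (t + 1) by ring, pow_mul]; norm_num
  rw [hpow, show 2 * t + 1 + 2 = 2 * t + 3 from rfl] at hC
  linear_combination (Nat.fib (2 * t + 1) : ℤ) * hA - (Nat.fib (2 * t + 2) : ℤ) * hB
    + (Nat.fib (2 * t + 2) : ℤ) * hC

noncomputable def gfn (n : ℕ) : ℝ := (Nat.fib (2 ^ n - 1) : ℝ) / (Nat.fib (2 ^ n) : ℝ)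

lemma fib_pow_pos (n : ℕ) : (0 : ℝ) < (Nat.fib (2 ^ n) : ℝ) := by
  exact_mod_cast Nat.fib_pos.mpr (Nat.two_pow_pos n)

lemma telescope (s : ℕ) :
    1 / (Nat.fib (2 ^ (s + 2)) : ℝ) = gfn (s + 1) - gfn (s + 2) := by
  have h : 1 ≤ 2 ^ s := Nat.one_le_two_pow
  set t := 2 ^ s - 1 with ht
  have e1 : 2 * t + 1 = 2 ^ (s + 1) - 1 := by rw [pow_succ]; omega
  have e2 : 2 * t + 2 = 2 ^ (s + 1) := by rw [pow_succ]; omega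
  have e3 : 4 * t + 4 = 2 ^ (s + 2) := by rw [pow_succ, pow_succ]; omega
  have e4 : 4 * t + 3 = 2 ^ (s + 2) - 1 := by rw [pow_succ, pow_succ]; omega
  have key := fib_key t
  rw [e1, e2, e3, e4] at key
  have keyR : (Nat.fib (2 ^ (s + 1) - 1) : ℝ) * Nat.fib (2 ^ (s + 2))
      - Nat.fib (2 ^ (s + 2) - 1) * Nat.fib (2 ^ (s + 1)) = Nat.fib (2 ^ (s + 1)) := by
    exact_mod_cast congrArg (Int.cast : ℤ → ℝ) key
  have p1 := fib_pow_pos (s + 1)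
  have p2 := fib_pow_pos (s + 2)
  rw [gfn, gfn]
  field_simp
  linear_combination -keyR

lemma partial_sum (n : ℕ) :
    ∑ k ∈ Finset.range (n + 2), 1 / (Nat.fib (2 ^ k) : ℝ) = 3 - gfn (n + 1) := by
  induction n with
  | zero => norm_num [gfn]
  | succ n ih =>
    rw [Finset.sum_range_succ, ih, telescope n]
    ring

lemma gfn_tendsto : Tendsto gfn atTop (nhds ((Real.sqrt 5 - 1) / 2)) := by
  have habs : |ψ| < 1 := abs_lt.mpr ⟨neg_one_lt_goldenConj, by linarith [goldenConj_neg]⟩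
  have hbound : ∀ n : ℕ, |gfn n - (Real.sqrt 5 - 1) / 2| ≤ |ψ| ^ n := by
    intro n
    have h1 : 1 ≤ 2 ^ n := Nat.one_le_two_pow
    have hc := fib_succ_sub_goldenRatio_mul_fib (2 ^ n - 1)
    rw [show 2 ^ n - 1 + 1 = 2 ^ n by omega] at hc
    have p := fib_pow_pos n
    have hfib1 : (1 : ℝ) ≤ Nat.fib (2 ^ n) := by
      exact_mod_cast Nat.one_le_iff_ne_zero.mpr (Nat.fib_pos.mpr (Nat.two_pow_pos n)).ne'
    have hg : gfn n - (Real.sqrt 5 - 1) / 2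
        = -ψ ^ (2 ^ n - 1) / (goldenRatio * Nat.fib (2 ^ n)) := by
      have h5 : Real.sqrt 5 ^ 2 = 5 := Real.sq_sqrt (by norm_num)
      have hg0 : gfn n - (Real.sqrt 5 - 1) / 2
          = -((Nat.fib (2 ^ n) : ℝ) - goldenRatio * (Nat.fib (2 ^ n - 1) : ℝ))
            / (goldenRatio * (Nat.fib (2 ^ n) : ℝ)) := by
        rw [gfn]
        have hφ : (0:ℝ) < goldenRatio := goldenRatio_pos
        field_simp
        linear_combination (-(Nat.fib (2 ^ n) : ℝ)) * h5
      rw [hg0, hc]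
    rw [hg]
    rw [abs_div, abs_neg, abs_pow]
    have hden : 1 ≤ |goldenRatio * (Nat.fib (2 ^ n) : ℝ)| := by
      rw [abs_of_pos (by positivity)]
      nlinarith [one_lt_goldenRatio]
    calc |ψ| ^ (2 ^ n - 1) / |goldenRatio * (Nat.fib (2 ^ n) : ℝ)|
        ≤ |ψ| ^ (2 ^ n - 1) / 1 := by
          apply div_le_div_of_nonneg_left (by positivity) (by norm_num) hden
      _ = |ψ| ^ (2 ^ n - 1) := by ring
      _ ≤ |ψ| ^ n := by
          apply pow_le_pow_of_le_one (abs_nonneg _) habs.le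
          have := Nat.lt_two_pow_self (n := n)
          omega
  have hzero : Tendsto (fun n : ℕ => |ψ| ^ n) atTop (nhds 0) :=
    tendsto_pow_atTop_nhds_zero_of_lt_one (abs_nonneg _) habs
  have hbound' : ∀ n : ℕ, ‖gfn n - (Real.sqrt 5 - 1) / 2‖ ≤ |ψ| ^ n := fun n => by
    simpa [Real.norm_eq_abs] using hbound n
  have := squeeze_zero_norm hbound' hzero
  have h2 := this.add_const ((Real.sqrt 5 - 1) / 2)
  simpa using h2

theorem stmt11 :
    HasSum (fun n : ℕ => 1 / (Nat.fib (2 ^ n) : ℝ)) ((7 - Real.sqrt 5) / 2) := by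
  rw [hasSum_iff_tendsto_nat_of_nonneg (fun i => by positivity)]
  rw [← tendsto_add_atTop_iff_nat 2]
  have : Tendsto (fun n : ℕ => 3 - gfn (n + 1)) atTop (nhds ((7 - Real.sqrt 5) / 2)) := by
    have h1 : Tendsto (fun n : ℕ => gfn (n + 1)) atTop (nhds ((Real.sqrt 5 - 1) / 2)) :=
      gfn_tendsto.comp (tendsto_add_atTop_nat 1)
    have h2 := (tendsto_const_nhds (x := (3:ℝ)) (f := atTop)).sub h1
    convert h2 using 2
    ring
  exact this.congr (fun n => (partial_sum n).symm)
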